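/- Constant combustion enthalpy at unit Lewis number: let ṁ > 0, β > 0, c_p > 0, ν < 0, M > 0, Q_mol ∈ ℝ and T₀ ∈ ℝ. Suppose T, Y : [0,∞) → ℝ are bounded, C¹ on [0,∞) and C² on (0,∞), and ω : (0,∞) → ℝ is such that ṁ·T′(x) − β·T″(x) = (Q_mol/c_p)·ω(x) and ṁ·Y′(x) − β·Y″(x) = ν·M·ω(x) for all x > 0. Then the combustion enthalpy h(x) = c_p·(T(x) − T₀) − (Q_mol/(ν·M))·Y(x) is constant on [0,∞). In particular, if moreover lim_{x→∞} Y(x) = 0 and lim_{x→∞} T(x) = T_f, then c_p·(T(x) − T₀) + Q_g·Y(x) = c_p·(T_f − T₀) for all x ≥ 0, where Q_g = −Q_mol/(ν·M). -/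

import Mathlib

open Set Real Filter

lemma aux_exp_ode (r : ℝ) (g : ℝ → ℝ) (hgc : ContinuousOn g (Set.Ici 0))
    (hg : ∀ x ∈ Set.Ioi (0:ℝ), HasDerivAt g (r * g x) x) :
    ∀ x ∈ Set.Ici (0:ℝ), g x = g 0 * Real.exp (r * x) := by
  set G : ℝ → ℝ := fun x => g x * Real.exp (-r * x) with hG
  have hGd : ∀ x ∈ Set.Ioi (0:ℝ), HasDerivAt G 0 x := by
    intro x hx
    have he : HasDerivAt (fun x => Real.exp (-r * x)) (Real.exp (-r * x) * (-r)) x := by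
      simpa using ((hasDerivAt_id x).const_mul (-r)).exp
    have := (hg x hx).mul he
    convert this using 1
    rfl; rfl; rfl
    ring
  have hkey : ∀ a b : ℝ, 0 < a → a ≤ b → G b = G a := by
    intro a b ha hab
    have hsub : Set.Icc a b ⊆ Set.Ioi 0 := fun t ht => lt_of_lt_of_le ha ht.1
    have hcont : ContinuousOn G (Set.Icc a b) := fun t ht =>
      ((hGd t (hsub ht)).continuousAt).continuousWithinAt
    have hderiv : ∀ t ∈ Set.Ico a b, HasDerivWithinAt G 0 (Set.Ici t) t := fun t ht =>
      (hGd t (hsub ⟨ht.1, ht.2.le⟩)).hasDerivWithinAt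
    exact constant_of_has_deriv_right_zero hcont hderiv b ⟨hab, le_rfl⟩
  have hGc : ContinuousOn G (Set.Ici 0) :=
    hgc.mul ((Real.continuous_exp.comp (continuous_const.mul continuous_id)).continuousOn)
  have hG0 : ∀ x ∈ Set.Ici (0:ℝ), G x = G 0 := by
    intro x hx
    rcases eq_or_lt_of_le (Set.mem_Ici.mp hx) with h0 | h0
    · rw [← h0]
    · have h1 : Filter.Tendsto G (nhdsWithin 0 (Set.Ioi 0)) (nhds (G 0)) :=
        ((hGc 0 Set.self_mem_Ici).mono Set.Ioi_subset_Ici_self)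
      have h2 : ∀ᶠ ε in nhdsWithin 0 (Set.Ioi 0), G ε = G x := by
        filter_upwards [Ioo_mem_nhdsGT_of_mem (Set.left_mem_Ico.2 h0)] with ε hε
        exact (hkey ε x hε.1 hε.2.le).symm
      have h3 : Filter.Tendsto G (nhdsWithin 0 (Set.Ioi 0)) (nhds (G x)) :=
        Filter.Tendsto.congr' (Filter.EventuallyEq.symm h2) tendsto_const_nhds
      exact tendsto_nhds_unique h3 h1
  intro x hx
  have := hG0 x hx
  have hG0v : G 0 = g 0 := by simp [hG]
  have : g x * Real.exp (-r * x) = g 0 := by rw [← hG0v]; exact this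
  calc g x = g x * Real.exp (-r * x) * Real.exp (r * x) := by
        rw [mul_assoc, ← Real.exp_add]; simp
    _ = g 0 * Real.exp (r * x) := by rw [this]

lemma aux_const_right (h : ℝ → ℝ)
    (hc : ∀ x ∈ Set.Ici (0:ℝ), HasDerivWithinAt h 0 (Set.Ici 0) x) :
    ∀ x ∈ Set.Ici (0:ℝ), h x = h 0 := by
  intro x hx
  have hcont : ContinuousOn h (Set.Icc 0 x) := fun t ht =>
    ((hc t ht.1).continuousWithinAt).mono (fun s hs => hs.1)
  have hderiv : ∀ t ∈ Set.Ico 0 x, HasDerivWithinAt h 0 (Set.Ici t) t := fun t ht =>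
    (hc t ht.1).mono (Set.Ici_subset_Ici.2 ht.1)
  exact constant_of_has_deriv_right_zero hcont hderiv x ⟨hx, le_rfl⟩


/-- Constant combustion enthalpy at unit Lewis number: with `ṁ > 0` the mass flow rate,
`β = λg/cp > 0` the common diffusion factor, `cp > 0`, `ν < 0`, `M > 0`, if the bounded
temperature `T` and reactant mass fraction `Y` are C¹ on `[0,∞)` (with derivatives
`T'`, `Y'`), C² on `(0,∞)` (with second derivatives `T''`, `Y''`), and satisfy
`ṁ·T′ − β·T″ = (Q_mol/cp)·ω` and `ṁ·Y′ − β·Y″ = ν·M·ω` on `(0,∞)`, then the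
combustion enthalpy `h(x) = cp·(T(x) − T₀) − (Q_mol/(ν·M))·Y(x)` is constant on
`[0,∞)`; in particular, if moreover `Y → 0` and `T → T_f` at `+∞`, then
`cp·(T(x) − T₀) + Q_g·Y(x) = cp·(T_f − T₀)` for all `x ≥ 0`, where
`Q_g = −Q_mol/(ν·M)`. -/
theorem constant_combustion_enthalpy
    (mdot β cp ν M Qmol T₀ Tf : ℝ)
    (hmdot : 0 < mdot) (hβ : 0 < β) (hcp : 0 < cp) (hν : ν < 0) (hM : 0 < M)
    (T Y T' Y' T'' Y'' ω : ℝ → ℝ)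
    (hTbdd : ∃ C, ∀ x ∈ Set.Ici (0:ℝ), |T x| ≤ C)
    (hYbdd : ∃ C, ∀ x ∈ Set.Ici (0:ℝ), |Y x| ≤ C)
    (hT1 : ∀ x ∈ Set.Ici (0:ℝ), HasDerivWithinAt T (T' x) (Set.Ici 0) x)
    (hY1 : ∀ x ∈ Set.Ici (0:ℝ), HasDerivWithinAt Y (Y' x) (Set.Ici 0) x)
    (hT'cont : ContinuousOn T' (Set.Ici 0))
    (hY'cont : ContinuousOn Y' (Set.Ici 0))
    (hT2 : ∀ x ∈ Set.Ioi (0:ℝ), HasDerivAt T' (T'' x) x)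
    (hY2 : ∀ x ∈ Set.Ioi (0:ℝ), HasDerivAt Y' (Y'' x) x)
    (hTeq : ∀ x ∈ Set.Ioi (0:ℝ), mdot * T' x - β * T'' x = (Qmol / cp) * ω x)
    (hYeq : ∀ x ∈ Set.Ioi (0:ℝ), mdot * Y' x - β * Y'' x = ν * M * ω x) :
    (∀ x ∈ Set.Ici (0:ℝ),
      cp * (T x - T₀) - (Qmol / (ν * M)) * Y x
        = cp * (T 0 - T₀) - (Qmol / (ν * M)) * Y 0) ∧
    (Filter.Tendsto Y Filter.atTop (nhds 0) →
      Filter.Tendsto T Filter.atTop (nhds Tf) →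
      ∀ x ∈ Set.Ici (0:ℝ),
        cp * (T x - T₀) + (-Qmol / (ν * M)) * Y x = cp * (Tf - T₀)) := by
  have hνM : ν * M ≠ 0 := (mul_neg_of_neg_of_pos hν hM).ne
  set k : ℝ := Qmol / (ν * M) with hk
  set r : ℝ := mdot / β with hrdef
  have hr : 0 < r := div_pos hmdot hβ
  set h : ℝ → ℝ := fun x => cp * (T x - T₀) - k * Y x with hh
  set g : ℝ → ℝ := fun x => cp * T' x - k * Y' x with hgdef
  -- h' = g on Ici 0
  have hh1 : ∀ x ∈ Set.Ici (0:ℝ), HasDerivWithinAt h (g x) (Set.Ici 0) x := fun x hx =>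
    (((hT1 x hx).sub_const T₀).const_mul cp).sub ((hY1 x hx).const_mul k)
  -- g' = r * g on Ioi 0
  have hg2 : ∀ x ∈ Set.Ioi (0:ℝ), HasDerivAt g (r * g x) x := by
    intro x hx
    have hd : HasDerivAt g (cp * T'' x - k * Y'' x) x :=
      ((hT2 x hx).const_mul cp).sub ((hY2 x hx).const_mul k)
    have e1 := hTeq x hx
    have e2 := hYeq x hx
    have hkm : k * (ν * M) = Qmol := div_mul_cancel₀ _ hνM
    have hcm : cp * (Qmol / cp) = Qmol := mul_div_cancel₀ _ hcp.ne'
    have hmulβ : β * (cp * T'' x - k * Y'' x) = mdot * (cp * T' x - k * Y' x) := by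
      linear_combination (-cp) * e1 + k * e2 - ω x * hcm + ω x * hkm
    have heq : cp * T'' x - k * Y'' x = r * g x := by
      refine mul_left_cancel₀ hβ.ne' ?_
      have hβr : β * (r * g x) = mdot * g x := by
        rw [hrdef]; field_simp
      rw [hmulβ, hβr]
    rwa [heq] at hd
  have hgc : ContinuousOn g (Set.Ici 0) :=
    (continuousOn_const.mul hT'cont).sub (continuousOn_const.mul hY'cont)
  have hgx := aux_exp_ode r g hgc hg2
  set c : ℝ := g 0 with hc
  -- h x = h 0 + (c/r)(exp(rx) - 1)
  have hH : ∀ x ∈ Set.Ici (0:ℝ), h x = h 0 + (c / r) * (Real.exp (r * x) - 1) := by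
    have hHd : ∀ x ∈ Set.Ici (0:ℝ),
        HasDerivWithinAt (fun x => h x - (c / r) * Real.exp (r * x)) 0 (Set.Ici 0) x := by
      intro x hx
      have he : HasDerivWithinAt (fun x => Real.exp (r * x)) (Real.exp (r * x) * r)
          (Set.Ici 0) x := by
        simpa using (((hasDerivAt_id x).const_mul r).exp).hasDerivWithinAt
      have := (hh1 x hx).sub (he.const_mul (c / r))
      convert this using 1
      rfl; rfl; rfl
      rw [hgx x hx]
      field_simp
      ring
    have := aux_const_right _ hHd
    intro x hx
    have h0 := this x hx
    have : h x - (c / r) * Real.exp (r * x) = h 0 - (c / r) * Real.exp (r * 0) := h0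
    simp at this
    linarith [this]
  -- boundedness forces c = 0
  obtain ⟨CT, hCT⟩ := hTbdd
  obtain ⟨CY, hCY⟩ := hYbdd
  set B : ℝ := cp * (CT + |T₀|) + |k| * CY with hB
  have hhbd : ∀ x ∈ Set.Ici (0:ℝ), |h x| ≤ B := by
    intro x hx
    have h1 : |T x - T₀| ≤ CT + |T₀| := (abs_sub _ _).trans (by gcongr; exact hCT x hx)
    have h2 : |Y x| ≤ CY := hCY x hx
    calc |h x| ≤ |cp * (T x - T₀)| + |k * Y x| := abs_sub _ _
      _ = cp * |T x - T₀| + |k| * |Y x| := by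
          rw [abs_mul, abs_mul, abs_of_pos hcp]
      _ ≤ B := by rw [hB]; gcongr
  have hc0 : c = 0 := by
    by_contra hcne
    have hm : 0 < |c / r| := abs_pos.2 (div_ne_zero hcne hr.ne')
    have key : ∀ x : ℝ, 0 ≤ x → |c / r| * (r * x) ≤ 2 * B := by
      intro x hx
      have h1 : |h x - h 0| ≤ 2 * B := by
        have := hhbd x hx
        have h0 := hhbd 0 Set.self_mem_Ici
        calc |h x - h 0| ≤ |h x| + |h 0| := abs_sub _ _
          _ ≤ 2 * B := by linarith
      have h2 : h x - h 0 = (c / r) * (Real.exp (r * x) - 1) := by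
        rw [hH x hx]; ring
      have h3 : |(c / r) * (Real.exp (r * x) - 1)| ≤ 2 * B := by rw [← h2]; exact h1
      have h4 : r * x ≤ Real.exp (r * x) - 1 := by
        have := Real.add_one_le_exp (r * x); linarith
      have h5 : (0:ℝ) ≤ r * x := mul_nonneg hr.le hx
      calc |c / r| * (r * x) ≤ |c / r| * (Real.exp (r * x) - 1) :=
            mul_le_mul_of_nonneg_left h4 (abs_nonneg _)
        _ = |(c / r) * (Real.exp (r * x) - 1)| := by
            rw [abs_mul, abs_of_nonneg (by linarith : (0:ℝ) ≤ Real.exp (r * x) - 1)]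
        _ ≤ 2 * B := h3
    have hBpos : 0 ≤ B := le_trans (abs_nonneg _) (hhbd 0 Set.self_mem_Ici)
    set x₀ : ℝ := (2 * B + 1) / (|c / r| * r) with hx₀
    have hx₀pos : 0 ≤ x₀ := div_nonneg (by linarith) (mul_nonneg hm.le hr.le)
    have := key x₀ hx₀pos
    have hval : |c / r| * (r * x₀) = 2 * B + 1 := by
      rw [hx₀]
      field_simp
    linarith [hval ▸ this]
  -- h constant
  have hconst : ∀ x ∈ Set.Ici (0:ℝ), h x = h 0 := by
    intro x hx
    rw [hH x hx, hc0]
    simp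
  refine ⟨hconst, ?_⟩
  intro hY0 hTf x hx
  have hlim : Filter.Tendsto h Filter.atTop (nhds (cp * (Tf - T₀) - k * 0)) :=
    (((hTf.sub_const T₀).const_mul cp)).sub (hY0.const_mul k)
  have hlim2 : Filter.Tendsto h Filter.atTop (nhds (h 0)) := by
    refine Filter.Tendsto.congr' ?_ tendsto_const_nhds
    filter_upwards [Filter.eventually_ge_atTop (0:ℝ)] with t ht
    exact (hconst t ht).symm
  have hval : h 0 = cp * (Tf - T₀) := by
    have := tendsto_nhds_unique hlim2 hlim
    simpa using this
  have : cp * (T x - T₀) + (-Qmol / (ν * M)) * Y x = h x := by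
    rw [hh, hk]
    ring
  rw [this, hconst x hx, hval]
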